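/- Let P₁,…,P_m be independent sub-uniform random variables (each ≤_cx Uniform[0,1]). Then for x ≥ 2m, P(−2·Σᵢ log Pᵢ ≥ x) ≤ S_{2m}(x − 2m·log 2), where S_{2m} is the survival function of a chi-squared distribution with 2m degrees of freedom. -/

import Mathlib

open MeasureTheory Set ProbabilityTheory

namespace FisherChi

open scoped ENNReal NNReal
open Real

noncomputable def T (n : ℕ) (y : ℝ) : ℝ≥0∞ :=
  if n = 0 then (Iic (0:ℝ)).indicator 1 y else gammaMeasure n (1/2) (Ioi y)

lemma gamma_singleton (a r : ℝ) (t : ℝ) : gammaMeasure a r {t} = 0 := by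
  rw [gammaMeasure, withDensity_apply _ (measurableSet_singleton t)]
  exact setLIntegral_measure_zero _ _ Real.volume_singleton

lemma gamma_Ici (a r t : ℝ) : gammaMeasure a r (Ici t) = gammaMeasure a r (Ioi t) := by
  refine le_antisymm ?_ (measure_mono Ioi_subset_Ici_self)
  rw [← Set.Ioi_insert, Set.insert_eq]
  calc gammaMeasure a r ({t} ∪ Ioi t) ≤ gammaMeasure a r {t} + gammaMeasure a r (Ioi t) :=
        measure_union_le _ _
    _ = gammaMeasure a r (Ioi t) := by rw [gamma_singleton, zero_add]

lemma gamma_one_Iic (r : ℝ) (hr : 0 < r) (t : ℝ) :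
    gammaMeasure 1 r (Iic t) = ENNReal.ofReal (if 0 ≤ t then 1 - exp (-(r*t)) else 0) := by
  rw [gammaMeasure, withDensity_apply _ measurableSet_Iic]
  exact lintegral_exponentialPDF_eq_antiDeriv hr t

lemma gamma_one_Ioi (t : ℝ) :
    gammaMeasure 1 (1/2) (Ioi t) = ENNReal.ofReal (min 1 (exp (-(t/2)))) := by
  haveI : IsProbabilityMeasure (gammaMeasure (1:ℝ) (1/2)) :=
    isProbabilityMeasure_gammaMeasure one_pos (by norm_num)
  rw [show Ioi t = (Iic t)ᶜ from compl_Iic.symm,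
    measure_compl measurableSet_Iic (measure_ne_top _ _), measure_univ,
    gamma_one_Iic _ (by norm_num) t]
  by_cases ht : 0 ≤ t
  · rw [if_pos ht]
    have he : rexp (-(t/2)) ≤ 1 := exp_le_one_iff.2 (by linarith)
    have hsub : 0 ≤ 1 - rexp (-(1/2*t)) := by
      have : rexp (-(1/2*t)) ≤ 1 := exp_le_one_iff.2 (by linarith)
      linarith
    rw [min_eq_right he, show (1:ℝ≥0∞) = ENNReal.ofReal 1 from ENNReal.ofReal_one.symm,
      ← ENNReal.ofReal_sub 1 hsub]
    congr 1
    have : -(1/2*t) = -(t/2) := by ring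
    rw [this]; ring
  · rw [if_neg ht, ENNReal.ofReal_zero, tsub_zero,
      min_eq_left (one_le_exp (by push_neg at ht; linarith)), ENNReal.ofReal_one]

lemma T_antitone (n : ℕ) : Antitone (T n) := by
  intro a b hab
  by_cases hn : n = 0
  · simp only [T, if_pos hn, indicator]
    split_ifs with hb ha ha
    · exact le_rfl
    · exact absurd (le_trans hab hb) ha
    · exact zero_le
    · exact le_rfl
  · simp only [T, if_neg hn]
    exact measure_mono (fun z hz => lt_of_le_of_lt hab hz)

lemma T_le_one (n : ℕ) (y : ℝ) : T n y ≤ 1 := by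
  by_cases hn : n = 0
  · simp only [T, if_pos hn]
    by_cases h : y ∈ Iic (0:ℝ) <;> simp [Set.indicator, h]
  · simp only [T, if_neg hn]
    haveI : IsProbabilityMeasure (gammaMeasure (n:ℝ) (1/2)) :=
      isProbabilityMeasure_gammaMeasure (by exact_mod_cast Nat.pos_of_ne_zero hn) (by norm_num)
    exact prob_le_one

lemma meas_le_of_upper {ν ρ : Measure ℝ} [IsProbabilityMeasure ν] [IsProbabilityMeasure ρ]
    (hdom : ∀ t, ν (Ici t) ≤ ρ (Ici t)) (hρ : ∀ t : ℝ, ρ {t} = 0)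
    {S : Set ℝ} (hS : ∀ ⦃a b : ℝ⦄, a ∈ S → a ≤ b → b ∈ S) : ν S ≤ ρ S := by
  rcases S.eq_empty_or_nonempty with rfl | hne
  · simp
  by_cases hbdd : BddBelow S
  · set c := sInf S
    have hsub1 : S ⊆ Ici c := fun s hs => csInf_le hbdd hs
    have hsub2 : Ioi c ⊆ S := by
      intro z hz
      obtain ⟨s, hs, hsx⟩ := (csInf_lt_iff hbdd hne).mp hz
      exact hS hs hsx.le
    calc ν S ≤ ν (Ici c) := measure_mono hsub1
      _ ≤ ρ (Ici c) := hdom c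
      _ ≤ ρ ({c} ∪ Ioi c) := measure_mono (fun z hz => by
            rcases (lt_or_eq_of_le (mem_Ici.mp hz)) with h | h
            · exact Or.inr h
            · exact Or.inl (by simp [← h]))
      _ ≤ ρ {c} + ρ (Ioi c) := measure_union_le _ _
      _ = ρ (Ioi c) := by rw [hρ, zero_add]
      _ ≤ ρ S := measure_mono hsub2
  · have hSuniv : S = univ := by
      ext z
      simp only [mem_univ, iff_true]
      obtain ⟨s, hs, hsx⟩ : ∃ s ∈ S, s < z := by
        by_contra hcon
        push_neg at hcon
        exact hbdd ⟨z, fun s hs => hcon s hs⟩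
      exact hS hs hsx.le
    rw [hSuniv]
    simp

lemma lintegral_mono_dom {ν ρ : Measure ℝ} [IsProbabilityMeasure ν] [IsProbabilityMeasure ρ]
    (hdom : ∀ t, ν (Ici t) ≤ ρ (Ici t)) (hρ : ∀ t : ℝ, ρ {t} = 0)
    {f : ℝ → ℝ≥0∞} (hmono : Monotone f) (hle : ∀ a, f a ≤ 1) :
    ∫⁻ a, f a ∂ν ≤ ∫⁻ a, f a ∂ρ := by
  set g : ℝ → ℝ := fun a => (f a).toReal with hg
  have hfne : ∀ a, f a ≠ ⊤ := fun a => ((hle a).trans_lt ENNReal.one_lt_top).ne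
  have hgmono : Monotone g := fun a b hab => ENNReal.toReal_mono (hfne b) (hmono hab)
  have hgm : Measurable g := hgmono.measurable
  have hof : ∀ a, ENNReal.ofReal (g a) = f a := fun a => ENNReal.ofReal_toReal (hfne a)
  have key : ∀ t : ℝ, ν {a | t < g a} ≤ ρ {a | t < g a} := fun t =>
    meas_le_of_upper hdom hρ (fun a b ha hab => lt_of_lt_of_le ha (hgmono hab))
  calc ∫⁻ a, f a ∂ν = ∫⁻ a, ENNReal.ofReal (g a) ∂ν := by simp_rw [hof]
    _ = ∫⁻ t in Ioi 0, ν {a | t < g a} :=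
        lintegral_eq_lintegral_meas_lt ν (ae_of_all _ fun a => ENNReal.toReal_nonneg)
          hgm.aemeasurable
    _ ≤ ∫⁻ t in Ioi 0, ρ {a | t < g a} := lintegral_mono fun t => key t
    _ = ∫⁻ a, ENNReal.ofReal (g a) ∂ρ :=
        (lintegral_eq_lintegral_meas_lt ρ (ae_of_all _ fun a => ENNReal.toReal_nonneg)
          hgm.aemeasurable).symm
    _ = ∫⁻ a, f a ∂ρ := by simp_rw [hof]

lemma gammaPDF_ne_top (a r x : ℝ) : gammaPDF a r x ≠ ⊤ := ENNReal.ofReal_ne_top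

lemma conv_pdf (n : ℕ) (hn : n ≠ 0) (s : ℝ) :
    ∫⁻ a, gammaPDF 1 (1/2) a * gammaPDF n (1/2) (s - a) = gammaPDF (↑(n+1)) (1/2) s := by
  rcases lt_or_ge s 0 with hs | hs
  · rw [gammaPDF_of_neg hs]
    calc ∫⁻ a, gammaPDF 1 (1/2) a * gammaPDF n (1/2) (s - a)
        = ∫⁻ _a : ℝ, (0:ℝ≥0∞) := lintegral_congr fun a => by
          rcases lt_or_ge a 0 with ha | ha
          · rw [gammaPDF_of_neg ha, zero_mul]
          · rw [gammaPDF_of_neg (show s - a < 0 by linarith), mul_zero]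
      _ = 0 := lintegral_zero
  · obtain ⟨k, rfl⟩ : ∃ k, n = k + 1 :=
      ⟨n - 1, (Nat.succ_pred_eq_of_pos (Nat.pos_of_ne_zero hn)).symm⟩
    have hGpos : 0 < Gamma ((k:ℝ)+1) := Gamma_pos_of_pos (by positivity)
    set C : ℝ := (1/2:ℝ)^(k+2) / Gamma ((k:ℝ)+1) with hC
    have hCnn : 0 ≤ C := div_nonneg (by positivity) hGpos.le
    have hpt : ∀ a : ℝ, gammaPDF 1 (1/2) a * gammaPDF (↑(k+1)) (1/2) (s - a)
        = (Icc 0 s).indicator (fun a => ENNReal.ofReal (C * (s-a)^k * exp (-(1/2 * s)))) a := by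
      intro a
      rcases lt_or_ge a 0 with ha | ha
      · rw [gammaPDF_of_neg ha, zero_mul,
          Set.indicator_of_notMem (fun h => absurd h.1 (not_le.2 ha))]
      · rcases lt_or_ge s a with has | has
        · rw [gammaPDF_of_neg (show s - a < 0 by linarith), mul_zero,
            Set.indicator_of_notMem (fun h : a ∈ Icc 0 s => absurd h.2 (not_le.2 has))]
        · rw [Set.indicator_of_mem (mem_Icc.mpr ⟨ha, has⟩),
            gammaPDF_of_nonneg ha, gammaPDF_of_nonneg (show (0:ℝ) ≤ s - a by linarith),
            ← ENNReal.ofReal_mul (by positivity)]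
          congr 1
          have hcast : ((k+1:ℕ):ℝ) - 1 = ((k:ℕ):ℝ) := by push_cast; ring
          simp only [rpow_one, Gamma_one, div_one, sub_self, rpow_zero, mul_one, hcast,
            rpow_natCast]
          have hexp : exp (-(1/2 * a)) * exp (-(1/2 * (s - a))) = exp (-(1/2 * s)) := by
            rw [← exp_add]; congr 1; ring
          calc (1/2) * exp (-(1/2*a))
                * ((1/2)^(k+1) / Gamma ((k+1:ℕ):ℝ) * (s-a)^k * exp (-(1/2*(s-a))))
              = (exp (-(1/2*a)) * exp (-(1/2*(s-a))))
                * ((1/2) * ((1/2)^(k+1) / Gamma ((k+1:ℕ):ℝ)) * (s-a)^k) := by ring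
            _ = C * (s-a)^k * exp (-(1/2 * s)) := by
                rw [hexp, hC]; push_cast; ring
    rw [lintegral_congr hpt, lintegral_indicator measurableSet_Icc]
    have hcont : Continuous fun a : ℝ => C * (s-a)^k * exp (-(1/2 * s)) :=
      (continuous_const.mul ((continuous_const.sub continuous_id).pow k)).mul continuous_const
    have hintg : IntegrableOn (fun a : ℝ => C * (s-a)^k * exp (-(1/2 * s))) (Icc 0 s) volume :=
      hcont.integrableOn_Icc
    have hnn : 0 ≤ᵐ[volume.restrict (Icc 0 s)] fun a : ℝ => C * (s-a)^k * exp (-(1/2*s)) := by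
      refine (ae_restrict_iff' measurableSet_Icc).mpr (ae_of_all _ fun a ha => ?_)
      simp only [Pi.zero_apply]
      exact mul_nonneg (mul_nonneg hCnn (pow_nonneg (by linarith [ha.2]) k)) (exp_nonneg _)
    rw [← MeasureTheory.ofReal_integral_eq_lintegral_ofReal hintg hnn]
    have hI : ∫ a in Icc 0 s, C * (s-a)^k * exp (-(1/2 * s))
        = C * exp (-(1/2*s)) * (s^(k+1)/(k+1)) := by
      rw [integral_Icc_eq_integral_Ioc, ← intervalIntegral.integral_of_le hs]
      have hpt2 : ∀ a : ℝ, C * (s-a)^k * exp (-(1/2*s)) = (C * exp (-(1/2*s))) * (s-a)^k :=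
        fun a => by ring
      simp_rw [hpt2]
      rw [intervalIntegral.integral_const_mul,
        intervalIntegral.integral_comp_sub_left (fun u : ℝ => u^k) s]
      simp only [sub_zero, sub_self]
      rw [integral_pow]
      rw [zero_pow (Nat.succ_ne_zero k)]
      push_cast
      ring
    rw [hI, gammaPDF_of_nonneg hs]
    congr 1
    have h1 : ((k+1+1:ℕ):ℝ) = (k:ℝ)+2 := by push_cast; ring
    rw [h1]
    have h2 : s ^ ((k:ℝ)+2-1) = s^(k+1) := by
      rw [show (k:ℝ)+2-1 = ((k+1:ℕ):ℝ) by push_cast; ring, rpow_natCast]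
    have h3 : ((1:ℝ)/2) ^ ((k:ℝ)+2) = (1/2:ℝ)^(k+2) := by
      rw [show (k:ℝ)+2 = ((k+2:ℕ):ℝ) by push_cast; ring, rpow_natCast]
    have h4 : Gamma ((k:ℝ)+2) = ((k:ℝ)+1) * Gamma ((k:ℝ)+1) := by
      rw [show (k:ℝ)+2 = ((k:ℝ)+1)+1 by ring, Gamma_add_one (by positivity)]
    rw [h2, h3, h4, hC]
    have hk1 : ((k:ℝ)+1) ≠ 0 := by positivity
    field_simp

lemma conv_step (n : ℕ) (hn : n ≠ 0) (y : ℝ) :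
    ∫⁻ a, gammaMeasure n (1/2) (Ioi (y - a)) ∂(gammaMeasure 1 (1/2))
      = gammaMeasure (↑(n+1)) (1/2) (Ioi y) := by
  have hpdfm : ∀ b : ℝ, Measurable (gammaPDF b (1/2)) :=
    fun b => (measurable_gammaPDFReal b (1/2)).ennreal_ofReal
  have hGmono : Monotone fun a => gammaMeasure (n:ℝ) (1/2) (Ioi (y - a)) := by
    intro a b hab
    refine measure_mono (fun z hz => ?_)
    simp only [mem_Ioi] at *
    linarith
  rw [show gammaMeasure 1 (1/2) = volume.withDensity (gammaPDF 1 (1/2)) from rfl,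
    lintegral_withDensity_eq_lintegral_mul _ (hpdfm 1) hGmono.measurable]
  have hindne : ∀ x : ℝ, (Ioi y).indicator (fun _ => (1:ℝ≥0∞)) x ≠ ⊤ := by
    intro x; by_cases h : x ∈ Ioi y <;> simp [h]
  have hin : ∀ a : ℝ, gammaMeasure (n:ℝ) (1/2) (Ioi (y - a))
      = ∫⁻ x, (Ioi y).indicator (fun _ => (1:ℝ≥0∞)) x * gammaPDF n (1/2) (x - a) := by
    intro a
    rw [gammaMeasure, withDensity_apply _ measurableSet_Ioi, ← lintegral_indicator measurableSet_Ioi]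
    calc ∫⁻ x, (Ioi (y-a)).indicator (gammaPDF n (1/2)) x
        = ∫⁻ x, (fun u => (Ioi y).indicator (fun _ => (1:ℝ≥0∞)) u * gammaPDF n (1/2) (u - a)) (x + a) := by
          refine lintegral_congr fun x => ?_
          by_cases hx : x ∈ Ioi (y - a)
          · have hx' : x + a ∈ Ioi y := by simp only [mem_Ioi] at *; linarith
            simp only [Set.indicator_of_mem hx, Set.indicator_of_mem hx', one_mul,
              add_sub_cancel_right]
          · have hx' : x + a ∉ Ioi y := by
              simp only [mem_Ioi] at *
              intro h; exact hx (by linarith)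
            simp only [Set.indicator_of_notMem hx, Set.indicator_of_notMem hx', zero_mul]
      _ = ∫⁻ x, (Ioi y).indicator (fun _ => (1:ℝ≥0∞)) x * gammaPDF n (1/2) (x - a) := by
          exact lintegral_add_right_eq_self (fun u => (Ioi y).indicator (fun _ => (1:ℝ≥0∞)) u * gammaPDF n (1/2) (u - a)) a
  calc ∫⁻ a, (gammaPDF 1 (1/2) * fun a => gammaMeasure (n:ℝ) (1/2) (Ioi (y - a))) a
      = ∫⁻ a, ∫⁻ x, gammaPDF 1 (1/2) a
          * ((Ioi y).indicator (fun _ => (1:ℝ≥0∞)) x * gammaPDF n (1/2) (x - a)) := by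
        refine lintegral_congr fun a => ?_
        simp only [Pi.mul_apply]
        rw [hin a, ← lintegral_const_mul' _ _ (gammaPDF_ne_top 1 (1/2) a)]
    _ = ∫⁻ x, ∫⁻ a, gammaPDF 1 (1/2) a
          * ((Ioi y).indicator (fun _ => (1:ℝ≥0∞)) x * gammaPDF n (1/2) (x - a)) := by
        refine lintegral_lintegral_swap ?_
        refine Measurable.aemeasurable ?_
        exact ((hpdfm 1).comp measurable_fst).mul
          (((measurable_const.indicator measurableSet_Ioi).comp measurable_snd).mul
            ((hpdfm n).comp (measurable_snd.sub measurable_fst)))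
    _ = ∫⁻ x, (Ioi y).indicator (fun _ => (1:ℝ≥0∞)) x
          * ∫⁻ a, gammaPDF 1 (1/2) a * gammaPDF n (1/2) (x - a) := by
        refine lintegral_congr fun x => ?_
        rw [← lintegral_const_mul' _ _ (hindne x)]
        refine lintegral_congr fun a => by ring
    _ = ∫⁻ x, (Ioi y).indicator (fun _ => (1:ℝ≥0∞)) x * gammaPDF (↑(n+1)) (1/2) x := by
        refine lintegral_congr fun x => by rw [conv_pdf n hn x]
    _ = ∫⁻ x in Ioi y, gammaPDF (↑(n+1)) (1/2) x := by
        rw [← lintegral_indicator measurableSet_Ioi]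
        refine lintegral_congr fun x => ?_
        by_cases h : x ∈ Ioi y
        · rw [Set.indicator_of_mem h, Set.indicator_of_mem h, one_mul]
        · rw [Set.indicator_of_notMem h, Set.indicator_of_notMem h, zero_mul]
    _ = gammaMeasure (↑(n+1)) (1/2) (Ioi y) := (withDensity_apply _ measurableSet_Ioi).symm

lemma map_pi {Ω : Type*} [MeasurableSpace Ω] (μ : Measure Ω) [IsProbabilityMeasure μ]
    {n : ℕ} (X : Fin n → Ω → ℝ) (hX : ∀ i, Measurable (X i))
    (hind : iIndepFun (m := fun _ => (inferInstance : MeasurableSpace ℝ)) X μ) :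
    μ.map (fun ω i => X i ω) = Measure.pi (fun i => μ.map (X i)) := by
  haveI : ∀ i, IsProbabilityMeasure (μ.map (X i)) :=
    fun i => Measure.isProbabilityMeasure_map (hX i).aemeasurable
  refine (Measure.pi_eq (μ := fun i => μ.map (X i)) (μ' := μ.map (fun ω i => X i ω)) fun s hs => ?_).symm
  rw [Measure.map_apply (measurable_pi_lambda _ hX) (MeasurableSet.univ_pi hs)]
  have hpre : (fun ω i => X i ω) ⁻¹' (univ.pi s) = ⋂ i, X i ⁻¹' s i := by
    ext ω; simp [Set.mem_pi]
  rw [hpre, hind.meas_iInter fun i => ⟨s i, hs i, rfl⟩]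
  exact Finset.prod_congr rfl fun i _ => (Measure.map_apply (hX i) (hs i)).symm

lemma main_induction : ∀ n (ν : Fin n → Measure ℝ), (∀ i, IsProbabilityMeasure (ν i)) →
    (∀ i t, ν i (Ici t) ≤ gammaMeasure 1 (1/2) (Ici t)) →
    ∀ y : ℝ, Measure.pi ν {p | y ≤ ∑ i, p i} ≤ T n y := by
  intro n
  haveI : IsProbabilityMeasure (gammaMeasure (1:ℝ) (1/2)) :=
    isProbabilityMeasure_gammaMeasure one_pos (by norm_num)
  induction n with
  | zero =>
    intro ν hprob hdom y
    haveI : ∀ i, IsProbabilityMeasure (ν i) := hprob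
    by_cases hy : y ≤ 0
    · have hset : {p : Fin 0 → ℝ | y ≤ ∑ i, p i} = univ := by
        ext p; simp [hy]
      rw [hset, measure_univ]
      simp [T, Set.indicator_of_mem (mem_Iic.mpr hy)]
    · have hset : {p : Fin 0 → ℝ | y ≤ ∑ i, p i} = ∅ := by
        ext p; simp; linarith [not_le.mp hy]
      rw [hset, measure_empty]
      exact zero_le
  | succ n IH =>
    intro ν hprob hdom y
    haveI : ∀ i, IsProbabilityMeasure (ν i) := hprob
    set ν' : Fin n → Measure ℝ := fun j => ν ((0 : Fin (n+1)).succAbove j) with hν'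
    haveI : ∀ j, IsProbabilityMeasure (ν' j) := fun j => hprob _
    have hmp := measurePreserving_piFinSuccAbove ν 0
    have hA : MeasurableSet {x : ℝ × (Fin n → ℝ) | y ≤ x.1 + ∑ j, x.2 j} := by
      refine measurableSet_le measurable_const ?_
      exact measurable_fst.add (Finset.measurable_sum _ fun j _ =>
        (measurable_pi_apply j).comp measurable_snd)
    have hpre : {p : Fin (n+1) → ℝ | y ≤ ∑ i, p i}
        = (MeasurableEquiv.piFinSuccAbove (fun _ => ℝ) 0) ⁻¹'
            {x : ℝ × (Fin n → ℝ) | y ≤ x.1 + ∑ j, x.2 j} := by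
      ext p
      simp [MeasurableEquiv.piFinSuccAbove, Fin.insertNthEquiv, Fin.sum_univ_succ,
        Fin.succAbove_zero, Fin.tail]
    rw [hpre, hmp.measure_preimage hA.nullMeasurableSet, Measure.prod_apply hA]
    have hsec : ∀ a : ℝ, (Prod.mk a ⁻¹' {x : ℝ × (Fin n → ℝ) | y ≤ x.1 + ∑ j, x.2 j})
        = {q : Fin n → ℝ | y - a ≤ ∑ j, q j} := by
      intro a; ext q
      simp only [mem_preimage, mem_setOf_eq]
      constructor <;> intro h <;> linarith
    calc ∫⁻ a, Measure.pi ν' (Prod.mk a ⁻¹' {x : ℝ × (Fin n → ℝ) | y ≤ x.1 + ∑ j, x.2 j}) ∂(ν 0)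
        ≤ ∫⁻ a, T n (y - a) ∂(ν 0) := by
          refine lintegral_mono fun a => ?_
          rw [hsec a]
          exact IH ν' (fun j => hprob _) (fun j t => hdom _ t) (y - a)
      _ ≤ ∫⁻ a, T n (y - a) ∂(gammaMeasure 1 (1/2)) := by
          refine lintegral_mono_dom (hdom 0) (gamma_singleton 1 (1/2)) ?_ (fun a => T_le_one n _)
          intro a b hab
          exact T_antitone n (by linarith : y - b ≤ y - a)
      _ = T (n+1) y := by
          by_cases hn : n = 0
          · subst hn
            have hT0 : ∀ a : ℝ, T 0 (y - a) = (Ici y).indicator (fun _ => (1:ℝ≥0∞)) a := by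
              intro a
              simp only [T, if_pos rfl, Set.indicator, mem_Iic, mem_Ici, sub_nonpos,
                Pi.one_apply]
              split_ifs <;> rfl
            simp_rw [hT0]
            rw [lintegral_indicator measurableSet_Ici, setLIntegral_one, gamma_Ici]
            simp [T]
          · have hTn : ∀ a : ℝ, T n (y - a) = gammaMeasure n (1/2) (Ioi (y - a)) := by
              intro a; simp [T, hn]
            simp_rw [hTn]
            rw [conv_step n hn y]
            simp [T]

lemma sub_bound {Ω : Type*} [MeasurableSpace Ω] (μ : Measure Ω) [IsProbabilityMeasure μ]
    (p : Ω → ℝ) (hmeas : Measurable p) (hmem : ∀ ω, p ω ∈ Icc (0:ℝ) 1)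
    (hcx : ∀ h : ℝ → ℝ, ConvexOn ℝ Set.univ h →
      Integrable (fun ω : Ω => h (p ω)) μ → IntegrableOn h (Icc (0:ℝ) 1) volume →
      ∫ ω, h (p ω) ∂μ ≤ ∫ u in Icc (0:ℝ) 1, h u)
    {α : ℝ} (h0 : 0 < α) (h1 : α ≤ 1/2) :
    μ {ω | p ω ≤ α} ≤ ENNReal.ofReal (2*α) := by
  set h : ℝ → ℝ := fun u => max (2*α - u) 0 with hh
  have hSmeas : MeasurableSet {ω | p ω ≤ α} := measurableSet_le hmeas measurable_const
  have hconv : ConvexOn ℝ Set.univ h := by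
    have c1 : ConvexOn ℝ Set.univ (fun u : ℝ => 2*α - u) :=
      ⟨convex_univ, fun x _ y _ a b _ _ hab => by
        simp only [smul_eq_mul]; nlinarith⟩
    have c2 : ConvexOn ℝ Set.univ (fun _ : ℝ => (0:ℝ)) := convexOn_const 0 convex_univ
    have := c1.sup c2
    simpa [hh, Pi.sup_def] using this
  have hm : Measurable fun ω => h (p ω) := (measurable_const.sub hmeas).max measurable_const
  have hint1 : Integrable (fun ω => h (p ω)) μ := by
    refine ⟨hm.aestronglyMeasurable, HasFiniteIntegral.of_bounded (C := 2*α)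
      (ae_of_all _ fun ω => ?_)⟩
    rw [Real.norm_eq_abs, abs_of_nonneg (le_max_right _ _)]
    exact max_le (by linarith [(hmem ω).1]) (by positivity)
  have hcont : Continuous h := (continuous_const.sub continuous_id).max continuous_const
  have hint2 : IntegrableOn h (Icc (0:ℝ) 1) volume := hcont.integrableOn_Icc
  have hub : ∫ u in Icc (0:ℝ) 1, h u = 2*α^2 := by
    rw [integral_Icc_eq_integral_Ioc, ← intervalIntegral.integral_of_le (by norm_num : (0:ℝ) ≤ 1),
      ← intervalIntegral.integral_add_adjacent_intervals (a := 0) (b := 2*α) (c := 1)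
        (hcont.intervalIntegrable _ _) (hcont.intervalIntegrable _ _)]
    have e1 : ∫ u in (0:ℝ)..(2*α), h u = ∫ u in (0:ℝ)..(2*α), (2*α - u) := by
      refine intervalIntegral.integral_congr fun u hu => ?_
      rw [uIcc_of_le (by positivity)] at hu
      exact max_eq_left (by linarith [hu.2])
    have e2 : ∫ u in (2*α)..1, h u = ∫ u in (2*α)..1, (0:ℝ) := by
      refine intervalIntegral.integral_congr fun u hu => ?_
      rw [uIcc_of_le (by linarith)] at hu
      exact max_eq_right (by linarith [hu.1])
    rw [e1, e2, intervalIntegral.integral_zero, add_zero,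
      intervalIntegral.integral_sub (intervalIntegrable_const) intervalIntegral.intervalIntegrable_id,
      intervalIntegral.integral_const, integral_id]
    simp only [smul_eq_mul, sub_zero]
    ring
  have hlb : α * (μ {ω | p ω ≤ α}).toReal ≤ ∫ ω, h (p ω) ∂μ := by
    have hptw : ∀ ω, ({ω | p ω ≤ α}).indicator (fun _ => α) ω ≤ h (p ω) := by
      intro ω
      by_cases hω : ω ∈ {ω | p ω ≤ α}
      · rw [Set.indicator_of_mem hω]
        have hpω : p ω ≤ α := hω
        exact le_trans (by linarith : α ≤ 2*α - p ω) (le_max_left _ _)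
      · rw [Set.indicator_of_notMem hω]
        exact le_max_right _ _
    calc α * (μ {ω | p ω ≤ α}).toReal
        = ∫ ω, ({ω | p ω ≤ α}).indicator (fun _ => α) ω ∂μ := by
          rw [integral_indicator_const _ hSmeas, smul_eq_mul, mul_comm, measureReal_def]
      _ ≤ ∫ ω, h (p ω) ∂μ := by
          refine integral_mono ((integrable_indicator_iff hSmeas).2 ?_) hint1 hptw
          exact (integrableOn_const (measure_ne_top _ _))
  have hkey := hcx h hconv hint1 hint2
  have htoReal : (μ {ω | p ω ≤ α}).toReal ≤ 2*α := by
    have hchain : α * (μ {ω | p ω ≤ α}).toReal ≤ α * (2*α) := by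
      calc α * (μ {ω | p ω ≤ α}).toReal ≤ ∫ ω, h (p ω) ∂μ := hlb
        _ ≤ ∫ u in Icc (0:ℝ) 1, h u := hkey
        _ = 2*α^2 := hub
        _ = α * (2*α) := by ring
    exact le_of_mul_le_mul_left hchain h0
  exact (ENNReal.le_ofReal_iff_toReal_le (measure_ne_top μ _) (by positivity)).2 htoReal

lemma dom_bound {Ω : Type*} [MeasurableSpace Ω] (μ : Measure Ω) [IsProbabilityMeasure μ]
    (p : Ω → ℝ) (hmeas : Measurable p) (hmem : ∀ ω, p ω ∈ Icc (0:ℝ) 1)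
    (hcx : ∀ h : ℝ → ℝ, ConvexOn ℝ Set.univ h →
      Integrable (fun ω : Ω => h (p ω)) μ → IntegrableOn h (Icc (0:ℝ) 1) volume →
      ∫ ω, h (p ω) ∂μ ≤ ∫ u in Icc (0:ℝ) 1, h u)
    (t : ℝ) :
    μ.map (fun ω => -2 * Real.log (p ω) - 2 * Real.log 2) (Ici t)
      ≤ gammaMeasure 1 (1/2) (Ici t) := by
  have hg : Measurable fun z : ℝ => -2 * Real.log z - 2 * Real.log 2 :=
    (Real.measurable_log.const_mul (-2)).sub measurable_const
  rw [Measure.map_apply (f := fun ω => -2 * Real.log (p ω) - 2 * Real.log 2)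
    (hg.comp hmeas) measurableSet_Ici, gamma_Ici, gamma_one_Ioi]
  by_cases ht : 0 < t
  · set α := exp (-(t/2))/2 with hα
    have hαpos : 0 < α := by positivity
    have hexplt : exp (-(t/2)) < 1 := exp_lt_one_iff.mpr (by linarith)
    have hα12 : α ≤ 1/2 := by rw [hα]; nlinarith
    have hsub : ((fun ω => -2 * Real.log (p ω) - 2 * Real.log 2) ⁻¹' Ici t)
        ⊆ {ω | p ω ≤ α} := by
      intro ω hω
      simp only [mem_preimage, mem_Ici] at hω
      by_cases hp0 : p ω = 0
      · simp only [mem_setOf_eq, hp0]; positivity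
      · have hppos : 0 < p ω := lt_of_le_of_ne (hmem ω).1 (Ne.symm hp0)
        have hlog : Real.log (p ω) ≤ -(t/2) - Real.log 2 := by linarith
        have := Real.exp_le_exp.2 hlog
        rw [Real.exp_log hppos] at this
        simp only [mem_setOf_eq]
        calc p ω ≤ exp (-(t/2) - Real.log 2) := this
          _ = exp (-(t/2)) * exp (-(Real.log 2)) := by
              rw [← Real.exp_add, sub_eq_add_neg]
          _ = exp (-(t/2)) * (1/2) := by
              congr 1
              rw [Real.exp_neg, Real.exp_log (by norm_num : (0:ℝ) < 2)]
              norm_num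
          _ = α := by rw [hα]; ring
    calc μ ((fun ω => -2 * Real.log (p ω) - 2 * Real.log 2) ⁻¹' Ici t)
        ≤ μ {ω | p ω ≤ α} := measure_mono hsub
      _ ≤ ENNReal.ofReal (2*α) := sub_bound μ p hmeas hmem hcx hαpos hα12
      _ = ENNReal.ofReal (min 1 (exp (-(t/2)))) := by
          rw [min_eq_right hexplt.le]
          congr 1
          rw [hα]; ring
  · rw [min_eq_left (one_le_exp (by push_neg at ht; linarith))]
    calc μ _ ≤ 1 := prob_le_one
      _ = ENNReal.ofReal 1 := ENNReal.ofReal_one.symm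

end FisherChi

/-- For independent sub-uniform `P₁,…,P_m` and `x ≥ 2m`,
`P(−2·Σ log Pᵢ ≥ x) ≤ S_{2m}(x − 2m·log 2)`, where `S_{2m}` is the survival
function of a chi-squared with `2m` degrees of freedom (a Gamma distribution
with shape `m` and rate `1/2`). -/
theorem fisher_bound_chi_squared
    {Ω : Type*} [MeasurableSpace Ω] (μ : Measure Ω) [IsProbabilityMeasure μ]
    (m : ℕ) (hm : 0 < m) (P : Fin m → Ω → ℝ)
    (hPmeas : ∀ i, Measurable (P i))
    (hPmem : ∀ i ω, P i ω ∈ Icc (0 : ℝ) 1)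
    (hindep : iIndepFun (m := fun _ => (inferInstance : MeasurableSpace ℝ)) P μ)
    (hcx : ∀ i, ∀ h : ℝ → ℝ, ConvexOn ℝ Set.univ h →
      Integrable (fun ω : Ω => h (P i ω)) μ → IntegrableOn h (Icc (0 : ℝ) 1) volume →
      ∫ ω, h (P i ω) ∂μ ≤ ∫ u in Icc (0 : ℝ) 1, h u)
    (x : ℝ) (hx : 2 * m ≤ x) :
    μ {ω | x ≤ -2 * ∑ i, Real.log (P i ω)}
      ≤ gammaMeasure m (1 / 2) (Ioi (x - 2 * m * Real.log 2)) := by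
  have hg : Measurable fun z : ℝ => -2 * Real.log z - 2 * Real.log 2 :=
    (Real.measurable_log.const_mul (-2)).sub measurable_const
  set Y : Fin m → Ω → ℝ := fun i ω => -2 * Real.log (P i ω) - 2 * Real.log 2 with hY
  have hYmeas : ∀ i, Measurable (Y i) := fun i => hg.comp (hPmeas i)
  have hYindep : iIndepFun (m := fun _ => (inferInstance : MeasurableSpace ℝ)) Y μ :=
    hindep.comp _ (fun _ => hg)
  haveI : ∀ i, IsProbabilityMeasure (μ.map (Y i)) :=
    fun i => Measure.isProbabilityMeasure_map (hYmeas i).aemeasurable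
  have hdom : ∀ i t, (μ.map (Y i)) (Ici t) ≤ gammaMeasure 1 (1/2) (Ici t) :=
    fun i t => FisherChi.dom_bound μ (P i) (hPmeas i) (hPmem i) (hcx i) t
  have hset : {ω | x ≤ -2 * ∑ i, Real.log (P i ω)}
      = {ω | x - 2*m*Real.log 2 ≤ ∑ i, Y i ω} := by
    ext ω
    simp only [mem_setOf_eq, hY]
    rw [Finset.sum_sub_distrib, Finset.sum_const, Finset.card_univ, Fintype.card_fin,
      nsmul_eq_mul, ← Finset.mul_sum]
    constructor <;> intro h <;> linarith
  rw [hset]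
  have hSmeas : MeasurableSet {q : Fin m → ℝ | x - 2*m*Real.log 2 ≤ ∑ i, q i} :=
    measurableSet_le measurable_const (Finset.measurable_sum _ fun i _ => measurable_pi_apply i)
  have hmap : μ {ω | x - 2*m*Real.log 2 ≤ ∑ i, Y i ω}
      = Measure.pi (fun i => μ.map (Y i)) {q : Fin m → ℝ | x - 2*m*Real.log 2 ≤ ∑ i, q i} := by
    rw [← FisherChi.map_pi μ Y hYmeas hYindep,
      Measure.map_apply (measurable_pi_lambda _ hYmeas) hSmeas]
    rfl
  rw [hmap]
  refine (FisherChi.main_induction m (fun i => μ.map (Y i)) (fun i => inferInstance) hdom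
    (x - 2*m*Real.log 2)).trans ?_
  simp [FisherChi.T, hm.ne']
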